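/- Let R ≥ 1, let c ∈ [0, R], and let τ > 0 satisfy 2R²τ < 1. Then the function a₀ : ℝ → ℝ defined by a₀(s) = s/τ − c · s · min{max(1 − s, 0), R} is strictly increasing on ℝ. -/
import Mathlib


/-- The truncation `Q_R(r) = min{max(r,0), R}`. -/
noncomputable def QR (R r : ℝ) : ℝ := min (max r 0) R

lemma QR_nonneg (R r : ℝ) (hR : 0 ≤ R) : 0 ≤ QR R r :=
  le_min (le_max_right _ _) hR

lemma QR_le (R r : ℝ) : QR R r ≤ R := min_le_right _ _

lemma QR_mono (R : ℝ) {r r' : ℝ} (h : r ≤ r') : QR R r ≤ QR R r' :=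
  min_le_min (max_le_max h le_rfl) le_rfl

lemma QR_lip (R : ℝ) {r r' : ℝ} (h : r ≤ r') : QR R r' - QR R r ≤ r' - r := by
  unfold QR
  have h1 : max r' 0 ≤ max r 0 + (r' - r) := by
    rcases le_total r' 0 with h' | h'
    · simp only [max_eq_right h']
      have := le_max_left r 0; have := le_max_right r 0; linarith
    · rw [max_eq_left h']
      have := le_max_left r 0; linarith
  have h2 : min (max r' 0) R ≤ min (max r 0 + (r' - r)) (R + (r' - r)) :=
    min_le_min h1 (by linarith)
  have h3 : min (max r 0 + (r' - r)) (R + (r' - r)) = min (max r 0) R + (r' - r) :=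
    min_add_add_right _ _ _
  linarith

lemma qr_key (R : ℝ) (hR : 1 ≤ R) {s t : ℝ} (hst : s < t) :
    t * QR R (1 - t) - s * QR R (1 - s) ≤ 2 * R * (t - s) := by
  set a := QR R (1 - t) with ha
  set b := QR R (1 - s) with hb
  have ha0 : 0 ≤ a := QR_nonneg _ _ (by linarith)
  have hb0 : 0 ≤ b := QR_nonneg _ _ (by linarith)
  have haR : a ≤ R := QR_le _ _
  have hbR : b ≤ R := QR_le _ _
  have hab : a ≤ b := QR_mono _ (by linarith)
  have hlip : b - a ≤ t - s := by
    have := QR_lip R (show (1 - t) ≤ (1 - s) by linarith)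
    linarith
  -- t*a - s*b = (t-s)*b + t*(a-b)
  rcases le_or_gt 0 t with ht | ht
  · nlinarith
  · rcases le_or_gt t (1 - R) with htR | htR
    · -- both truncations equal R
      have haeq : a = R := by
        rw [ha]; unfold QR
        rw [max_eq_left (by linarith), min_eq_right (by linarith)]
      have hbeq : b = R := by
        rw [hb]; unfold QR
        rw [max_eq_left (by linarith), min_eq_right (by linarith)]
      rw [haeq, hbeq]; nlinarith
    · -- |t| < R - 1
      nlinarith

/-- Let `R ≥ 1`, `c ∈ [0, R]`, and `τ > 0` with `2R²τ < 1`. Then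
`a₀(s) = s/τ − c·s·Q_R(1 − s)` is strictly increasing on `ℝ`. -/
theorem stmt_6 (R c τ : ℝ) (hR : 1 ≤ R) (hc : c ∈ Set.Icc 0 R)
    (hτ : 0 < τ) (hRτ : 2 * R ^ 2 * τ < 1) :
    StrictMono (fun s : ℝ => s / τ - c * s * QR R (1 - s)) := by
  obtain ⟨hc0, hcR⟩ := hc
  intro s t hst
  simp only
  have key := qr_key R hR hst
  have hg : c * (t * QR R (1 - t) - s * QR R (1 - s)) ≤ 2 * R ^ 2 * (t - s) := by
    rcases le_total (t * QR R (1 - t) - s * QR R (1 - s)) 0 with h | h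
    · nlinarith
    · calc c * (t * QR R (1 - t) - s * QR R (1 - s)) ≤ R * (2 * R * (t - s)) := by
            nlinarith
        _ = 2 * R ^ 2 * (t - s) := by ring
  have hdiv : 2 * R ^ 2 * (t - s) < (t - s) / τ := by
    rw [lt_div_iff₀ hτ]
    nlinarith
  have h1 : c * t * QR R (1 - t) - c * s * QR R (1 - s)
      = c * (t * QR R (1 - t) - s * QR R (1 - s)) := by ring
  have h2 : t / τ - s / τ = (t - s) / τ := by ring
  nlinarith [hg, hdiv]
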